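/- For every θ ∈ (0,1), tan(θπ/2)/(θπ/2) < (2−θ)/(1−θ). -/

import Mathlib

open Real

lemma cos_gt (θ : ℝ) (h0 : 0 < θ) (h1 : θ < 1) : 1 - θ < Real.cos (θ * Real.pi / 2) := by
  have h := strictConcaveOn_cos_Icc.2 (x := (0:ℝ)) (y := π / 2)
    (Set.mem_Icc.2 (by constructor <;> linarith [pi_pos]))
    (Set.mem_Icc.2 (by constructor <;> linarith [pi_pos]))
    (by positivity) (by linarith : (0:ℝ) < 1 - θ) h0 (by ring)
  have e : (1 - θ) • (0:ℝ) + θ • (π / 2) = θ * π / 2 := by simp only [smul_eq_mul]; ring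
  rw [e] at h
  simpa using h

theorem tan_div_lt (θ : ℝ) (h0 : 0 < θ) (h1 : θ < 1) :
    Real.tan (θ * Real.pi / 2) / (θ * Real.pi / 2) < (2 - θ) / (1 - θ) := by
  set x := θ * Real.pi / 2 with hx
  have hπ := pi_pos
  have hxpos : 0 < x := by positivity
  have hcos : 1 - θ < Real.cos x := cos_gt θ h0 h1
  have h1θ : (0:ℝ) < 1 - θ := by linarith
  have hsin : Real.sin x < x := Real.sin_lt hxpos
  have hsinpos : 0 < Real.sin x := Real.sin_pos_of_pos_of_lt_pi hxpos
    (by rw [hx]; nlinarith)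
  have htan : Real.tan x < x / (1 - θ) := by
    rw [Real.tan_eq_sin_div_cos]
    calc Real.sin x / Real.cos x < Real.sin x / (1 - θ) := by
          exact div_lt_div_of_pos_left hsinpos h1θ hcos
      _ < x / (1 - θ) := by gcongr
  calc Real.tan x / x < (x / (1 - θ)) / x := by gcongr
    _ = 1 / (1 - θ) := by field_simp
    _ < (2 - θ) / (1 - θ) := by gcongr; linarith
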